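/- Let C be an F_q-linear subspace of F_q^m × (F_q^k × F_q^{n−k}) × F_q^m of dimension m + k (as arises from a systematic convolutional encoder, where the first k output coordinates are information symbols and the last n−k are parity symbols), and let Ĉ be its twisted dual constraint code (for which the last n−k output coordinates are information symbols and the first k are parity symbols). Define the input-parity weight adjacency matrix Λ_C(x_I,y_I,x_P,y_P) as the matrix indexed by F_q^m × F_q^m whose (w,w') entry is Σ_{(p₁,p₂) with (w,(p₁,p₂),w') ∈ C} x_I^{k−wt(p₁)} y_I^{wt(p₁)} x_P^{(n−k)−wt(p₂)} y_P^{wt(p₂)}, and define Λ_Ĉ(x_I,y_I,x_P,y_P) as the matrix whose (w,w') entry is Σ_{(p₁,p₂) with (w,(p₁,p₂),w') ∈ Ĉ} x_P^{k−wt(p₁)} y_P^{wt(p₁)} x_I^{(n−k)−wt(p₂)} y_I^{wt(p₂)}. Then for all complex x_I, y_I, x_P, y_P: Λ_Ĉ(x_I,y_I,x_P,y_P) = q^{−(m+k)} · F_m · Λ_C(x_P+(q−1)y_P, x_P−y_P, x_I+(q−1)y_I, x_I−y_I) · F_m†. -/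

import Mathlib

/-!
STATEMENT 7: MacWilliams identity for input-parity weight adjacency matrices
of a systematic constraint code `C ⊆ F_q^m × (F_q^k × F_q^{n−k}) × F_q^m` of
dimension `m + k` and its twisted dual `Ĉ`:
`Λ_Ĉ(x_I,y_I,x_P,y_P) = q^{−(m+k)} · F_m · Λ_C(x_P+(q−1)y_P, x_P−y_P, x_I+(q−1)y_I, x_I−y_I) · F_m†`.
-/

open scoped Classical
open Matrix

noncomputable section

variable (p : ℕ) [Fact p.Prime] (F : Type) [Field F] [Fintype F] [Algebra (ZMod p) F]

/-- Hamming weight of a vector. -/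
def wt {n : ℕ} (v : Fin n → F) : ℕ := (Finset.univ.filter fun i => v i ≠ 0).card

/-- The twisted dual constraint code
`Ĉ = {(w,p,w') : w·w₀ + p·p₀ − w'·w₁ = 0 for all (w₀,p₀,w₁) ∈ C}`, where the
output block is split into an information block and a parity block. -/
def twistedDual {m k r : ℕ}
    (C : Set ((Fin m → F) × ((Fin k → F) × (Fin r → F)) × (Fin m → F))) :
    Set ((Fin m → F) × ((Fin k → F) × (Fin r → F)) × (Fin m → F)) :=
  {v | ∀ c ∈ C, (∑ i, v.1 i * c.1 i) + ((∑ i, v.2.1.1 i * c.2.1.1 i)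
      + (∑ i, v.2.1.2 i * c.2.1.2 i)) - (∑ i, v.2.2 i * c.2.2 i) = 0}

/-- Input-parity weight adjacency matrix of `S`, with the first output block
(of length `k`) as information block and the second (of length `r = n−k`) as
parity block. -/
def IPWAM {m k r : ℕ}
    (S : Set ((Fin m → F) × ((Fin k → F) × (Fin r → F)) × (Fin m → F)))
    (xI yI xP yP : ℂ) : Matrix (Fin m → F) (Fin m → F) ℂ := fun w w' =>
  ∑ pv : (Fin k → F) × (Fin r → F), if (w, pv, w') ∈ S then
    xI ^ (k - wt F pv.1) * yI ^ wt F pv.1 * xP ^ (r - wt F pv.2) * yP ^ wt F pv.2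
  else 0

/-- The Fourier matrix `F_m` with `(a,b)` entry `ω^{tr(a·b)}`. -/
def FourierMat (m : ℕ) : Matrix (Fin m → F) (Fin m → F) ℂ := fun a b =>
  Complex.exp (2 * Real.pi * Complex.I / p) ^
    (Algebra.trace (ZMod p) F (∑ i, a i * b i)).val

/-! ### Auxiliary character machinery -/

set_option linter.unusedSectionVars false

def om : ℂ := Complex.exp (2 * Real.pi * Complex.I / p)

lemma om_pow_p : om p ^ p = 1 := by
  rw [om, ← Complex.exp_nat_mul, mul_div_cancel₀]
  · exact Complex.exp_two_pi_mul_I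
  · exact_mod_cast (Fact.out : p.Prime).ne_zero

lemma om_prim : IsPrimitiveRoot (om p) p :=
  Complex.isPrimitiveRoot_exp p (Fact.out : p.Prime).ne_zero

def ec (x : F) : ℂ := om p ^ (Algebra.trace (ZMod p) F x).val

lemma ec_zero : ec p F 0 = 1 := by simp [ec]

lemma om_pow_mod (a : ℕ) : om p ^ (a % p) = om p ^ a := by
  conv_rhs => rw [← Nat.mod_add_div a p]
  rw [pow_add, pow_mul, om_pow_p, one_pow, mul_one]

lemma ec_add (x y : F) : ec p F (x + y) = ec p F x * ec p F y := by
  rw [ec, ec, ec, map_add, ZMod.val_add, om_pow_mod, pow_add]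

lemma ec_sum {ι : Type*} (s : Finset ι) (f : ι → F) :
    ec p F (∑ i ∈ s, f i) = ∏ i ∈ s, ec p F (f i) := by
  induction s using Finset.induction with
  | empty => simp [ec_zero]
  | @insert a s h ih => rw [Finset.sum_insert h, Finset.prod_insert h, ec_add, ih]

lemma ec_mul_neg (x : F) : ec p F x * ec p F (-x) = 1 := by
  rw [← ec_add]; simp [ec_zero]

lemma ec_conj (x : F) : (starRingEnd ℂ) (ec p F x) = ec p F (-x) := by
  have h1 : (starRingEnd ℂ) (om p) = (om p)⁻¹ := by
    rw [om, ← Complex.exp_conj, ← Complex.exp_neg]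
    congr 1
    simp [map_div₀, Complex.conj_I, map_ofNat]
    ring
  rw [ec, map_pow, h1, inv_pow]
  exact inv_eq_of_mul_eq_one_right (ec_mul_neg p F x)

lemma ec_nontriv : ∃ x : F, ec p F x ≠ 1 := by
  obtain ⟨x, hx⟩ := Algebra.trace_surjective (ZMod p) F 1
  refine ⟨x, ?_⟩
  rw [ec, hx, ZMod.val_one, pow_one]
  exact (om_prim p).ne_one (Fact.out : p.Prime).one_lt

lemma sum_ec : ∑ x : F, ec p F x = 0 := by
  obtain ⟨t, ht⟩ := ec_nontriv p F
  have h : ec p F t * ∑ x : F, ec p F x = ∑ x : F, ec p F x := by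
    rw [Finset.mul_sum]
    calc ∑ x : F, ec p F t * ec p F x = ∑ x : F, ec p F (x + t) := by
          refine Finset.sum_congr rfl fun x _ => ?_
          rw [ec_add, mul_comm]
      _ = ∑ x : F, ec p F x := Equiv.sum_comp (Equiv.addRight t) (ec p F)
  have h2 : (ec p F t - 1) * ∑ x : F, ec p F x = 0 := by linear_combination h
  rcases mul_eq_zero.mp h2 with h' | h'
  · exact absurd (by linear_combination h') ht
  · exact h'

lemma sum_ec_mul (t : F) (ht : t ≠ 0) : ∑ s : F, ec p F (t * s) = 0 := by
  rw [← sum_ec p F]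
  exact Fintype.sum_equiv (Equiv.mulLeft₀ t ht) _ _ (fun x => rfl)

lemma sum_ec_submodule {V : Type} [AddCommGroup V] [Module F V] [Fintype V]
    (W : Submodule F V) (φ : V → F)
    (hadd : ∀ a b, φ (a + b) = φ a + φ b)
    (hsmul : ∀ (t : F) a, φ (t • a) = t * φ a) :
    ∑ c : W, ec p F (φ c) =
      if ∀ c ∈ W, φ c = 0 then (Fintype.card W : ℂ) else 0 := by
  split_ifs with h
  · rw [Fintype.card_eq_sum_ones]
    push_cast
    exact Finset.sum_congr rfl fun c _ => by rw [h c c.2, ec_zero]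
  · push_neg at h
    obtain ⟨c₀, hc₀W, hc₀⟩ := h
    obtain ⟨u, hu⟩ := ec_nontriv p F
    set c₁ : V := (u / φ c₀) • c₀ with hc₁def
    have hc₁W : c₁ ∈ W := W.smul_mem _ hc₀W
    have hφc₁ : φ c₁ = u := by
      rw [hc₁def, hsmul, div_mul_cancel₀ _ hc₀]
    have h : ec p F u * ∑ c : W, ec p F (φ c) = ∑ c : W, ec p F (φ c) := by
      rw [Finset.mul_sum]
      calc ∑ c : W, ec p F u * ec p F (φ c)
          = ∑ c : W, ec p F (φ ((c + ⟨c₁, hc₁W⟩ : W) : V)) := by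
            refine Finset.sum_congr rfl fun c _ => ?_
            rw [show ((c + ⟨c₁, hc₁W⟩ : W) : V) = (c : V) + c₁ from rfl,
              hadd, ec_add, hφc₁, mul_comm]
        _ = ∑ c : W, ec p F (φ c) :=
            Equiv.sum_comp (Equiv.addRight (⟨c₁, hc₁W⟩ : W)) (fun c : W => ec p F (φ (c : V)))
    have h2 : (ec p F u - 1) * ∑ c : W, ec p F (φ c) = 0 := by linear_combination h
    rcases mul_eq_zero.mp h2 with h' | h'
    · exact absurd (by linear_combination h') hu
    · exact h'

lemma prod_ite_wt {l : ℕ} (v : Fin l → F) (X Y : ℂ) :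
    (∏ i, if v i = 0 then X else Y) = X ^ (l - wt F v) * Y ^ wt F v := by
  rw [Finset.prod_ite, Finset.prod_const, Finset.prod_const]
  have hne : (Finset.univ.filter fun i => ¬ v i = 0).card = wt F v := by
    rw [wt]
  have hc := Finset.card_filter_add_card_filter_not
    (s := (Finset.univ : Finset (Fin l))) (p := fun i => v i = 0)
  rw [Finset.card_univ, Fintype.card_fin, hne] at hc
  have h0 : (Finset.univ.filter fun i => v i = 0).card = l - wt F v := by omega
  rw [h0, hne]

lemma coord_sum (t : F) (X Y : ℂ) :
    (∑ s : F, ec p F (s * t) * (if s = 0 then X else Y))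
      = if t = 0 then X + ((Fintype.card F : ℂ) - 1) * Y else X - Y := by
  split_ifs with h
  · subst h
    simp only [mul_zero, ec_zero, one_mul]
    have key : ∀ s : F, (if s = 0 then X else Y) = Y + (if s = 0 then X - Y else 0) := by
      intro s; split_ifs <;> ring
    rw [Finset.sum_congr rfl fun s _ => key s, Finset.sum_add_distrib,
      Finset.sum_const, Finset.sum_ite_eq' Finset.univ (0 : F) (fun _ => X - Y),
      if_pos (Finset.mem_univ _), Finset.card_univ, nsmul_eq_mul]
    ring
  · have key : ∀ s : F, ec p F (s * t) * (if s = 0 then X else Y)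
        = ec p F (s * t) * Y + (if s = 0 then X - Y else 0) := by
      intro s
      split_ifs with hs
      · subst hs; rw [zero_mul, ec_zero]; ring
      · ring
    rw [Finset.sum_congr rfl fun s _ => key s, Finset.sum_add_distrib]
    have h1 : ∑ s : F, ec p F (s * t) * Y = 0 := by
      rw [← Finset.sum_mul]
      have h2 : ∑ s : F, ec p F (s * t) = 0 := by
        rw [← sum_ec_mul p F t h]
        exact Finset.sum_congr rfl fun s _ => by rw [mul_comm]
      rw [h2, zero_mul]
    rw [h1, zero_add, Finset.sum_ite_eq' Finset.univ (0 : F) (fun _ => X - Y),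
      if_pos (Finset.mem_univ _)]

lemma vec_expand {l : ℕ} (t : Fin l → F) (X Y : ℂ) :
    (X + ((Fintype.card F : ℂ) - 1) * Y) ^ (l - wt F t) * (X - Y) ^ wt F t
      = ∑ v : Fin l → F, ec p F (∑ i, v i * t i) * (X ^ (l - wt F v) * Y ^ wt F v) := by
  calc (X + ((Fintype.card F : ℂ) - 1) * Y) ^ (l - wt F t) * (X - Y) ^ wt F t
      = ∏ i, if t i = 0 then X + ((Fintype.card F : ℂ) - 1) * Y else X - Y :=
        (prod_ite_wt F t _ _).symm
    _ = ∏ i, ∑ s : F, ec p F (s * t i) * (if s = 0 then X else Y) :=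
        Finset.prod_congr rfl fun i _ => (coord_sum p F (t i) X Y).symm
    _ = ∑ v : Fin l → F, ∏ i, ec p F (v i * t i) * (if v i = 0 then X else Y) :=
        Fintype.prod_sum _
    _ = ∑ v : Fin l → F, ec p F (∑ i, v i * t i) * (X ^ (l - wt F v) * Y ^ wt F v) := by
        refine Finset.sum_congr rfl fun v _ => ?_
        rw [Finset.prod_mul_distrib, ← ec_sum, prod_ite_wt]

theorem stmt7 (m n k : ℕ)
    (C : Submodule F ((Fin m → F) × ((Fin k → F) × (Fin (n - k) → F)) × (Fin m → F)))
    (hC : Module.finrank F C = m + k) (xI yI xP yP : ℂ) :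
    -- `Λ_Ĉ(x_I,y_I,x_P,y_P)`: for the dual, the first block is the parity
    -- block and the second block is the information block.
    (IPWAM F (twistedDual F
        (C : Set ((Fin m → F) × ((Fin k → F) × (Fin (n - k) → F)) × (Fin m → F))))
        xP yP xI yI)
      = ((Fintype.card F : ℂ) ^ (m + k))⁻¹ •
          (FourierMat p F m *
            IPWAM F (C : Set ((Fin m → F) × ((Fin k → F) × (Fin (n - k) → F)) × (Fin m → F)))
              (xP + ((Fintype.card F : ℂ) - 1) * yP) (xP - yP)
              (xI + ((Fintype.card F : ℂ) - 1) * yI) (xI - yI) *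
            (FourierMat p F m)ᴴ) := by
  set qc : ℂ := (Fintype.card F : ℂ) with hqc
  have hqc0 : qc ≠ 0 := by
    rw [hqc]; exact_mod_cast Fintype.card_ne_zero
  have hcard : (Fintype.card C : ℂ) = qc ^ (m + k) := by
    rw [Module.card_eq_pow_finrank (K := F) (V := C), hC]; push_cast [hqc]; ring
  have hFour : ∀ a b : Fin m → F, FourierMat p F m a b = ec p F (∑ i, a i * b i) :=
    fun _ _ => rfl
  have hstar : ∀ a b : Fin m → F, star (FourierMat p F m a b) = ec p F (-∑ i, a i * b i) :=
    fun a b => (ec_conj p F _)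
  set Mdual : ((Fin k → F) × (Fin (n - k) → F)) → ℂ := fun pv =>
    xP ^ (k - wt F pv.1) * yP ^ wt F pv.1 * xI ^ (n - k - wt F pv.2) * yI ^ wt F pv.2 with hMdual
  ext w w'
  set φ : ((Fin k → F) × (Fin (n - k) → F)) →
      ((Fin m → F) × ((Fin k → F) × (Fin (n - k) → F)) × (Fin m → F)) → F := fun pv c =>
    (∑ i, w i * c.1 i) + ((∑ i, pv.1 i * c.2.1.1 i) + (∑ i, pv.2 i * c.2.1.2 i))
      - (∑ i, w' i * c.2.2 i) with hφ
  have hadd : ∀ pv a b, φ pv (a + b) = φ pv a + φ pv b := by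
    intro pv a b
    simp only [hφ, Prod.fst_add, Prod.snd_add, Pi.add_apply, mul_add,
      Finset.sum_add_distrib]
    ring
  have hsmul : ∀ pv (t : F) a, φ pv (t • a) = t * φ pv a := by
    intro pv t a
    simp only [hφ, Prod.smul_fst, Prod.smul_snd, Pi.smul_apply, smul_eq_mul,
      mul_left_comm _ t, ← Finset.mul_sum]
    ring
  have key : ∀ pv, (∑ c : C, ec p F (φ pv c))
      = if (w, pv, w') ∈ twistedDual F (C : Set ((Fin m → F) × ((Fin k → F) × (Fin (n - k) → F)) × (Fin m → F))) then qc ^ (m + k) else 0 := by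
    intro pv
    rw [sum_ec_submodule p F C (φ pv) (hadd pv) (hsmul pv), hcard]
    exact if_congr Iff.rfl rfl rfl
  have expand : ∀ y : (Fin m → F) × ((Fin k → F) × (Fin (n - k) → F)) × (Fin m → F),
      ec p F (∑ i, w i * y.1 i) *
        ((xP + (qc - 1) * yP) ^ (k - wt F y.2.1.1) * (xP - yP) ^ wt F y.2.1.1 *
          ((xI + (qc - 1) * yI) ^ (n - k - wt F y.2.1.2) * (xI - yI) ^ wt F y.2.1.2)) *
        ec p F (-∑ i, w' i * y.2.2 i)
      = ∑ pv : (Fin k → F) × (Fin (n - k) → F), ec p F (φ pv y) * Mdual pv := by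
    intro y
    rw [vec_expand p F y.2.1.1 xP yP, vec_expand p F y.2.1.2 xI yI]
    simp only [Finset.mul_sum, Finset.sum_mul]
    rw [Finset.sum_comm]
    refine Eq.trans ?_ (Fintype.sum_prod_type
      (f := fun pv : (Fin k → F) × (Fin (n - k) → F) => ec p F (φ pv y) * Mdual pv)).symm
    refine Finset.sum_congr rfl fun v1 _ => Finset.sum_congr rfl fun v2 _ => ?_
    have hsplit : φ (v1, v2) y = (∑ i, w i * y.1 i) + ((∑ i, v1 i * y.2.1.1 i)
        + (∑ i, v2 i * y.2.1.2 i)) + (-(∑ i, w' i * y.2.2 i)) := by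
      rw [hφ]; ring
    rw [hsplit, ec_add, ec_add, ec_add, hMdual]
    ring
  simp only [Matrix.smul_apply, Matrix.mul_apply, Matrix.conjTranspose_apply, smul_eq_mul]
  have main : (∑ x : Fin m → F, (∑ y : Fin m → F, FourierMat p F m w y *
        IPWAM F (C : Set ((Fin m → F) × ((Fin k → F) × (Fin (n - k) → F)) × (Fin m → F))) (xP + (qc - 1) * yP) (xP - yP)
          (xI + (qc - 1) * yI) (xI - yI) y x) * star (FourierMat p F m w' x))
      = qc ^ (m + k) *
        ∑ pv : (Fin k → F) × (Fin (n - k) → F),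
          (if (w, pv, w') ∈ twistedDual F (C : Set ((Fin m → F) × ((Fin k → F) × (Fin (n - k) → F)) × (Fin m → F))) then Mdual pv else 0) := by
    calc (∑ x : Fin m → F, (∑ y : Fin m → F, FourierMat p F m w y * IPWAM F (C : Set ((Fin m → F) × ((Fin k → F) × (Fin (n - k) → F)) × (Fin m → F)))
            (xP + (qc - 1) * yP) (xP - yP) (xI + (qc - 1) * yI) (xI - yI) y x)
            * star (FourierMat p F m w' x))
        = ∑ x : Fin m → F, ∑ y : Fin m → F, ∑ pv' : (Fin k → F) × (Fin (n - k) → F),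
            (if (y, pv', x) ∈ (C : Set ((Fin m → F) × ((Fin k → F) × (Fin (n - k) → F)) × (Fin m → F))) then
              ec p F (∑ i, w i * y i) *
              ((xP + (qc - 1) * yP) ^ (k - wt F pv'.1) * (xP - yP) ^ wt F pv'.1 *
                ((xI + (qc - 1) * yI) ^ (n - k - wt F pv'.2) * (xI - yI) ^ wt F pv'.2)) *
              ec p F (-∑ i, w' i * x i) else 0) := by
          refine Finset.sum_congr rfl fun x _ => ?_
          rw [Finset.sum_mul]
          refine Finset.sum_congr rfl fun y _ => ?_
          rw [IPWAM, hFour, hstar, Finset.mul_sum, Finset.sum_mul]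
          refine Finset.sum_congr rfl fun pv' _ => ?_
          split_ifs with hmem
          · ring
          · ring
      _ = ∑ y : (Fin m → F) × ((Fin k → F) × (Fin (n - k) → F)) × (Fin m → F),
            (if y ∈ (C : Set ((Fin m → F) × ((Fin k → F) × (Fin (n - k) → F)) × (Fin m → F))) then ec p F (∑ i, w i * y.1 i) *
            ((xP + (qc - 1) * yP) ^ (k - wt F y.2.1.1) * (xP - yP) ^ wt F y.2.1.1 *
              ((xI + (qc - 1) * yI) ^ (n - k - wt F y.2.1.2) * (xI - yI) ^ wt F y.2.1.2)) *
            ec p F (-∑ i, w' i * y.2.2 i) else 0) := by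
          rw [Finset.sum_comm, Fintype.sum_prod_type]
          refine Finset.sum_congr rfl fun a _ => ?_
          rw [Fintype.sum_prod_type, Finset.sum_comm]
      _ = ∑ c : C, ec p F (∑ i, w i * (c : (Fin m → F) × ((Fin k → F) × (Fin (n - k) → F)) × (Fin m → F)).1 i) *
            ((xP + (qc - 1) * yP) ^ (k - wt F (c : (Fin m → F) × ((Fin k → F) × (Fin (n - k) → F)) × (Fin m → F)).2.1.1) * (xP - yP) ^ wt F (c : (Fin m → F) × ((Fin k → F) × (Fin (n - k) → F)) × (Fin m → F)).2.1.1 *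
              ((xI + (qc - 1) * yI) ^ (n - k - wt F (c : (Fin m → F) × ((Fin k → F) × (Fin (n - k) → F)) × (Fin m → F)).2.1.2) * (xI - yI) ^ wt F (c : (Fin m → F) × ((Fin k → F) × (Fin (n - k) → F)) × (Fin m → F)).2.1.2)) *
            ec p F (-∑ i, w' i * (c : (Fin m → F) × ((Fin k → F) × (Fin (n - k) → F)) × (Fin m → F)).2.2 i) := by
          rw [← Finset.sum_filter]
          exact Finset.sum_subtype _ (by simp) _
      _ = ∑ c : C, ∑ pv : (Fin k → F) × (Fin (n - k) → F), ec p F (φ pv c) * Mdual pv :=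
          Finset.sum_congr rfl fun c _ => expand (c : (Fin m → F) × ((Fin k → F) × (Fin (n - k) → F)) × (Fin m → F))
      _ = ∑ pv : (Fin k → F) × (Fin (n - k) → F), (∑ c : C, ec p F (φ pv c)) * Mdual pv := by
          rw [Finset.sum_comm]
          exact Finset.sum_congr rfl fun pv _ => by rw [Finset.sum_mul]
      _ = qc ^ (m + k) * ∑ pv : (Fin k → F) × (Fin (n - k) → F),
            (if (w, pv, w') ∈ twistedDual F (C : Set ((Fin m → F) × ((Fin k → F) × (Fin (n - k) → F)) × (Fin m → F))) then Mdual pv else 0) := by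
          rw [Finset.mul_sum]
          refine Finset.sum_congr rfl fun pv _ => ?_
          rw [key pv]
          split_ifs with hmem
          · ring
          · ring
  rw [main, ← mul_assoc, inv_mul_cancel₀ (pow_ne_zero _ hqc0), one_mul]
  rw [IPWAM, hMdual]
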